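/- Let H = (V, E) be a hypergraph in which every vertex belongs to at least one hyperedge. Then for infinitely many positive integers N there exist a finite domain D_N and, for each hyperedge e ∈ E, a relation R_e ⊆ (e → D_N) with |R_e| ≤ N, such that the join (the set of all tuples t : V → D_N whose restriction to e belongs to R_e for every e ∈ E) has size at least N^{ρ*(H)}, where ρ*(H) is the fractional edge cover number of H. -/

import Mathlib

theorem farkas_fin : ∀ (n : ℕ) {I : Type} [Fintype I] (A : I → Fin n → ℚ) (b : I → ℚ),
    (¬ ∃ x : Fin n → ℚ, ∀ i, ∑ j, A i j * x j ≤ b i) →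
    ∃ c : I → ℚ, (∀ i, 0 ≤ c i) ∧ (∀ j, ∑ i, c i * A i j = 0) ∧ ∑ i, c i * b i < 0 := by
  intro n
  induction n with
  | zero =>
    intro I _ A b h
    classical
    push_neg at h
    obtain ⟨i₀, hi₀⟩ := h (fun j => 0)
    simp only [Finset.univ_eq_empty, Finset.sum_empty] at hi₀
    refine ⟨fun i => if i = i₀ then 1 else 0, ?_, ?_, ?_⟩
    · intro i; by_cases hi : i = i₀ <;> simp [hi]
    · exact fun j => j.elim0
    · have : ∑ i, (if i = i₀ then (1:ℚ) else 0) * b i = b i₀ := by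
        simp [ite_mul, Finset.sum_ite_eq']
      rw [this]
      simpa using hi₀
  | succ n ih =>
    intro I _ A b h
    classical
    set l := Fin.last n with hl
    set P : I → I → Prop := fun i k => 0 < A i l ∧ A k l < 0 with hP
    set val : (I → ℚ) → I ⊕ I × I → ℚ := fun g s =>
      Sum.rec (fun i => if A i l = 0 then g i else 0)
        (fun p => if P p.1 p.2 then g p.1 / A p.1 l - g p.2 / A p.2 l else 0) s with hval
    set B : I ⊕ I × I → Fin n → ℚ := fun s j => val (fun i => A i j.castSucc) s with hB
    set b' : I ⊕ I × I → ℚ := val b with hb'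
    -- eliminated system is infeasible
    have hinf : ¬ ∃ x : Fin n → ℚ, ∀ s, ∑ j, B s j * x j ≤ b' s := by
      rintro ⟨x', hx'⟩
      apply h
      set r : I → ℚ := fun i => ∑ j, A i j.castSucc * x' j with hr
      have hzero : ∀ i, A i l = 0 → r i ≤ b i := by
        intro i hi
        have := hx' (Sum.inl i)
        simpa [hB, hb', hval, hi, hr] using this
      have hpair : ∀ i k, P i k → (b k - r k) / A k l ≤ (b i - r i) / A i l := by
        intro i k hik
        have h2 := hx' (Sum.inr (i, k))
        simp only [hB, hb', hval, if_pos hik] at h2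
        have hsum : ∑ j, (A i j.castSucc / A i l - A k j.castSucc / A k l) * x' j
            = r i / A i l - r k / A k l := by
          rw [hr]
          rw [Finset.sum_div, Finset.sum_div, ← Finset.sum_sub_distrib]
          exact Finset.sum_congr rfl (fun j _ => by ring)
        rw [hsum] at h2
        have : (b i - r i) / A i l - (b k - r k) / A k l ≥ 0 := by
          rw [sub_div, sub_div]
          linarith
        linarith
      set up : I → ℚ := fun i => (b i - r i) / A i l with hup
      set Iplus : Finset I := Finset.univ.filter (fun i => 0 < A i l) with hIp
      set Iminus : Finset I := Finset.univ.filter (fun i => A i l < 0) with hIm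
      set z : ℚ := if hp : Iplus.Nonempty then Iplus.inf' hp up
        else if hm : Iminus.Nonempty then Iminus.sup' hm up else 0 with hz
      have hlow : ∀ k, A k l < 0 → up k ≤ z := by
        intro k hk
        have hkm : k ∈ Iminus := by simp [hIm, hk]
        by_cases hp : Iplus.Nonempty
        · rw [hz, dif_pos hp]
          obtain ⟨i0, hi0, heq⟩ := Finset.exists_mem_eq_inf' hp up
          rw [heq]
          have hi0' : 0 < A i0 l := by
            rw [hIp] at hi0; simpa using hi0
          exact hpair i0 k ⟨hi0', hk⟩
        · rw [hz, dif_neg hp, dif_pos ⟨k, hkm⟩]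
          exact Finset.le_sup' up hkm
      have hhigh : ∀ i, 0 < A i l → z ≤ up i := by
        intro i hi
        have him : i ∈ Iplus := by simp [hIp, hi]
        rw [hz, dif_pos ⟨i, him⟩]
        exact Finset.inf'_le up him
      refine ⟨(Fin.snoc x' z : Fin (n+1) → ℚ), fun i => ?_⟩
      have hsum : ∑ j, A i j * (Fin.snoc x' z : Fin (n+1) → ℚ) j = r i + A i l * z := by
        rw [Fin.sum_univ_castSucc]
        simp [hr, hl]
      rw [hsum]
      rcases lt_trichotomy (A i l) 0 with hneg | hzero' | hpos
      · have := hlow i hneg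
        rw [hup] at this
        have h3 : A i l * z ≤ b i - r i := by
          rw [div_le_iff_of_neg hneg] at this
          linarith
        linarith
      · rw [hzero', zero_mul, add_zero]; exact hzero i hzero'
      · have := hhigh i hpos
        rw [hup, le_div_iff₀ hpos] at this
        linarith
    obtain ⟨d, hd0, hdcol, hdval⟩ := ih B b' hinf
    set c : I → ℚ := fun i =>
      (if A i l = 0 then d (Sum.inl i) else 0)
      + (∑ k, if P i k then d (Sum.inr (i, k)) / A i l else 0)
      + (∑ k, if P k i then d (Sum.inr (k, i)) / (-A i l) else 0) with hc
    have key : ∀ g : I → ℚ, ∑ i, c i * g i = ∑ s, d s * val g s := by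
      intro g
      rw [Fintype.sum_sum_type]
      have e1 : ∑ i, (if A i l = 0 then d (Sum.inl i) else 0) * g i
          = ∑ i, d (Sum.inl i) * val g (Sum.inl i) := by
        refine Finset.sum_congr rfl (fun i _ => ?_)
        simp only [hval]; split_ifs <;> ring
      have e2 : ∑ i, (∑ k, if P i k then d (Sum.inr (i, k)) / A i l else 0) * g i
          = ∑ i, ∑ k, if P i k then d (Sum.inr (i, k)) * (g i / A i l) else 0 := by
        refine Finset.sum_congr rfl (fun i _ => ?_)
        rw [Finset.sum_mul]
        refine Finset.sum_congr rfl (fun k _ => ?_)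
        split_ifs <;> ring
      have e3 : ∑ i, (∑ k, if P k i then d (Sum.inr (k, i)) / (-A i l) else 0) * g i
          = ∑ i, ∑ k, if P i k then -(d (Sum.inr (i, k)) * (g k / A k l)) else 0 := by
        have step1 : ∑ i, (∑ k, if P k i then d (Sum.inr (k, i)) / (-A i l) else 0) * g i
            = ∑ i, ∑ k, (if P k i then d (Sum.inr (k, i)) / (-A i l) else 0) * g i :=
          Finset.sum_congr rfl (fun i _ => Finset.sum_mul ..)
        rw [step1, Finset.sum_comm]
        refine Finset.sum_congr rfl (fun i _ => Finset.sum_congr rfl (fun k _ => ?_))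
        split_ifs with hpk
        · rw [div_neg, neg_mul, div_mul_eq_mul_div, mul_div_assoc]
        · ring
      have e4 : ∑ p : I × I, d (Sum.inr p) * val g (Sum.inr p)
          = (∑ i, ∑ k, if P i k then d (Sum.inr (i, k)) * (g i / A i l) else 0)
            + ∑ i, ∑ k, if P i k then -(d (Sum.inr (i, k)) * (g k / A k l)) else 0 := by
        rw [Fintype.sum_prod_type, ← Finset.sum_add_distrib]
        refine Finset.sum_congr rfl (fun i _ => ?_)
        rw [← Finset.sum_add_distrib]
        refine Finset.sum_congr rfl (fun k _ => ?_)
        simp only [hval]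
        split_ifs <;> ring
      calc ∑ i, c i * g i
          = ∑ i, ((if A i l = 0 then d (Sum.inl i) else 0) * g i
              + (∑ k, if P i k then d (Sum.inr (i, k)) / A i l else 0) * g i
              + (∑ k, if P k i then d (Sum.inr (k, i)) / (-A i l) else 0) * g i) := by
            refine Finset.sum_congr rfl (fun i _ => ?_)
            rw [hc]; ring
        _ = ∑ i, d (Sum.inl i) * val g (Sum.inl i)
              + ∑ p : I × I, d (Sum.inr p) * val g (Sum.inr p) := by
            rw [Finset.sum_add_distrib, Finset.sum_add_distrib, e1, e2, e3, e4]
            ring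
    refine ⟨c, ?_, ?_, ?_⟩
    · intro i
      rw [hc]
      have t1 : (0:ℚ) ≤ if A i l = 0 then d (Sum.inl i) else 0 := by
        split_ifs; exacts [hd0 _, le_refl 0]
      have t2 : (0:ℚ) ≤ ∑ k, if P i k then d (Sum.inr (i, k)) / A i l else 0 := by
        refine Finset.sum_nonneg (fun k _ => ?_)
        split_ifs with hik
        · exact div_nonneg (hd0 _) (le_of_lt hik.1)
        · exact le_refl 0
      have t3 : (0:ℚ) ≤ ∑ k, if P k i then d (Sum.inr (k, i)) / (-A i l) else 0 := by
        refine Finset.sum_nonneg (fun k _ => ?_)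
        split_ifs with hik
        · exact div_nonneg (hd0 _) (by linarith [hik.2])
        · exact le_refl 0
      linarith
    · intro j
      refine Fin.lastCases ?_ ?_ j
      · rw [key (fun i => A i l)]
        refine Finset.sum_eq_zero (fun s _ => ?_)
        rcases s with i | ⟨i, k⟩
        · simp only [hval]
          split_ifs with hi
          · rw [hi, mul_zero]
          · rw [mul_zero]
        · simp only [hval]
          split_ifs with hik
          · rw [div_self (ne_of_gt hik.1), div_self (ne_of_lt hik.2), sub_self, mul_zero]
          · rw [mul_zero]
      · intro j'
        rw [key (fun i => A i j'.castSucc)]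
        exact hdcol j'
    · rw [key b]
      exact hdval

theorem farkas_gen {ι I : Type} [Fintype ι] [Fintype I] (A : I → ι → ℚ) (b : I → ℚ)
    (h : ¬ ∃ x : ι → ℚ, ∀ i, ∑ j, A i j * x j ≤ b i) :
    ∃ c : I → ℚ, (∀ i, 0 ≤ c i) ∧ (∀ j, ∑ i, c i * A i j = 0) ∧ ∑ i, c i * b i < 0 := by
  classical
  set e := Fintype.equivFin ι with he
  have h' : ¬ ∃ x : Fin (Fintype.card ι) → ℚ,
      ∀ i, ∑ j', A i (e.symm j') * x j' ≤ b i := by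
    rintro ⟨x', hx'⟩
    apply h
    refine ⟨fun j => x' (e j), fun i => ?_⟩
    have := hx' i
    rw [← Equiv.sum_comp e (fun j' => A i (e.symm j') * x' j')] at this
    simpa using this
  obtain ⟨c, h0, hcol, hval⟩ := farkas_fin _ (fun i j' => A i (e.symm j')) b h'
  refine ⟨c, h0, fun j => ?_, hval⟩
  have := hcol (e j)
  rwa [Equiv.symm_apply_apply] at this

variable {V : Type} [Fintype V] [DecidableEq V]

def covA (E : Finset (Finset V)) :
    (({e // e ∈ E} ⊕ V) ⊕ (V ⊕ ({e // e ∈ E} ⊕ Unit))) → ({e // e ∈ E} ⊕ V) → ℚ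
  | .inl j₀, j => if j = j₀ then -1 else 0
  | .inr (.inl v), .inl e => if v ∈ e.1 then -1 else 0
  | .inr (.inl _), .inr _ => 0
  | .inr (.inr (.inl _)), .inl _ => 0
  | .inr (.inr (.inl e)), .inr v => if v ∈ e.1 then 1 else 0
  | .inr (.inr (.inr _)), .inl _ => 1
  | .inr (.inr (.inr _)), .inr _ => -1

def covb (E : Finset (Finset V)) :
    (({e // e ∈ E} ⊕ V) ⊕ (V ⊕ ({e // e ∈ E} ⊕ Unit))) → ℚ
  | .inl _ => 0
  | .inr (.inl _) => -1
  | .inr (.inr (.inl _)) => 1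
  | .inr (.inr (.inr _)) => 0

/-- Feasibility of the combined primal-dual system over ℚ. -/
theorem combined_feasible (E : Finset (Finset V)) (hcov : ∀ v : V, ∃ e ∈ E, v ∈ e) :
    ∃ (f : {e // e ∈ E} → ℚ) (y : V → ℚ),
      (∀ e, 0 ≤ f e) ∧
      (∀ v : V, 1 ≤ ∑ e : {e // e ∈ E}, if v ∈ e.1 then f e else 0) ∧
      (∀ v, 0 ≤ y v) ∧
      (∀ e : {e // e ∈ E}, (∑ v : V, if v ∈ e.1 then y v else 0) ≤ 1) ∧
      (∑ e, f e) ≤ ∑ v, y v := by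
  classical
  have feas : ∃ x : ({e // e ∈ E} ⊕ V) → ℚ, ∀ i, ∑ j, covA E i j * x j ≤ covb E i := by
    by_contra hinfeas
    obtain ⟨c, hc0, hcol, hval⟩ := farkas_gen (covA E) (covb E) hinfeas
    set w : V → ℚ := fun v => c (.inr (.inl v)) with hw
    set g : {e // e ∈ E} → ℚ := fun e => c (.inr (.inr (.inl e))) with hg
    set s : ℚ := c (.inr (.inr (.inr default))) with hs
    -- column identities
    have colE : ∀ e : {e // e ∈ E},
        (∑ v : V, if v ∈ e.1 then w v else 0) = s - c (.inl (.inl e)) := by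
      intro e
      have h1 := hcol (.inl e)
      simp only [Fintype.sum_sum_type, covA, mul_ite, mul_neg_one, mul_zero, mul_one,
        Finset.sum_ite_eq', Finset.mem_univ, if_true, Finset.sum_const_zero,
        Finset.univ_unique, Finset.sum_singleton, Sum.inl.injEq, Sum.inr.injEq,
        reduceCtorEq, if_false, Finset.sum_ite_eq] at h1
      have hneg : ∑ v : V, (if v ∈ e.1 then -w v else 0)
          = - ∑ v : V, (if v ∈ e.1 then w v else 0) := by
        rw [← Finset.sum_neg_distrib]
        exact Finset.sum_congr rfl fun v _ => by split_ifs <;> simp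
      rw [hw] at hneg
      rw [hneg] at h1
      linarith
    have colV : ∀ v : V,
        (∑ e : {e // e ∈ E}, if v ∈ e.1 then g e else 0) = s + c (.inl (.inr v)) := by
      intro v
      have h1 := hcol (.inr v)
      simp only [Fintype.sum_sum_type, covA, mul_ite, mul_neg_one, mul_zero, mul_one,
        Finset.sum_ite_eq', Finset.mem_univ, if_true, Finset.sum_const_zero,
        Finset.univ_unique, Finset.sum_singleton, Sum.inl.injEq, Sum.inr.injEq,
        reduceCtorEq, if_false, Finset.sum_ite_eq] at h1
      rw [hg]
      linarith
    have hvalue : (∑ e : {e // e ∈ E}, g e) < ∑ v : V, w v := by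
      have h1 := hval
      simp only [Fintype.sum_sum_type, covb, mul_ite, mul_neg_one, mul_zero, mul_one,
        Finset.sum_const_zero, Finset.univ_unique, Finset.sum_singleton] at h1
      rw [Finset.sum_neg_distrib] at h1
      have e1 : ∑ e : {e // e ∈ E}, g e = ∑ x : {e // e ∈ E}, c (.inr (.inr (.inl x))) := rfl
      have e2 : ∑ v : V, w v = ∑ x : V, c (.inr (.inl x)) := rfl
      linarith
    -- double counting
    have hW : ∀ e : {e // e ∈ E}, (∑ v : V, if v ∈ e.1 then w v else 0) ≤ s := by
      intro e
      have := colE e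
      have := hc0 (.inl (.inl e))
      linarith
    have hG : ∀ v : V, s ≤ ∑ e : {e // e ∈ E}, if v ∈ e.1 then g e else 0 := by
      intro v
      have := colV v
      have := hc0 (.inl (.inr v))
      linarith
    have hs0 : 0 ≤ s := hc0 _
    have hgnn : ∀ e, 0 ≤ g e := fun e => hc0 _
    have hwnn : ∀ v, 0 ≤ w v := fun v => hc0 _
    have hD : s * ∑ v, w v ≤ s * ∑ e, g e := by
      have h2 : ∀ e : {e // e ∈ E}, g e * (∑ v : V, if v ∈ e.1 then w v else 0) ≤ g e * s :=
        fun e => mul_le_mul_of_nonneg_left (hW e) (hgnn e)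
      have h3 : ∀ v : V, w v * s ≤ w v * ∑ e : {e // e ∈ E}, if v ∈ e.1 then g e else 0 :=
        fun v => mul_le_mul_of_nonneg_left (hG v) (hwnn v)
      have hswap : ∑ e : {e // e ∈ E}, g e * (∑ v : V, if v ∈ e.1 then w v else 0)
          = ∑ v : V, w v * (∑ e : {e // e ∈ E}, if v ∈ e.1 then g e else 0) := by
        simp only [Finset.mul_sum]
        rw [Finset.sum_comm]
        refine Finset.sum_congr rfl fun v _ => Finset.sum_congr rfl fun e _ => ?_
        split_ifs <;> ring
      calc s * ∑ v, w v = ∑ v, w v * s := by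
            rw [Finset.mul_sum]; exact Finset.sum_congr rfl fun v _ => mul_comm _ _
        _ ≤ ∑ v : V, w v * (∑ e : {e // e ∈ E}, if v ∈ e.1 then g e else 0) :=
            Finset.sum_le_sum fun v _ => h3 v
        _ = ∑ e : {e // e ∈ E}, g e * (∑ v : V, if v ∈ e.1 then w v else 0) := hswap.symm
        _ ≤ ∑ e, g e * s := Finset.sum_le_sum fun e _ => h2 e
        _ = s * ∑ e, g e := by
            rw [Finset.mul_sum]; exact Finset.sum_congr rfl fun e _ => mul_comm _ _
    rcases eq_or_lt_of_le hs0 with hseq | hspos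
    · -- s = 0 : every w v = 0, contradiction with value
      have hwzero : ∀ v : V, w v = 0 := by
        intro v
        obtain ⟨e, heE, hve⟩ := hcov v
        have hWe := hW ⟨e, heE⟩
        have hnn : ∀ v' ∈ Finset.univ, (0:ℚ) ≤ if v' ∈ e then w v' else 0 := by
          intro v' _
          split_ifs
          · exact hwnn v'
          · exact le_refl 0
        have hsum0 : (∑ v' : V, if v' ∈ e then w v' else 0) = 0 :=
          le_antisymm (by rw [← hseq] at hWe; exact hWe) (Finset.sum_nonneg hnn)
        have := (Finset.sum_eq_zero_iff_of_nonneg hnn).1 hsum0 v (Finset.mem_univ v)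
        simpa [hve] using this
      have : ∑ v : V, w v = 0 := Finset.sum_eq_zero fun v _ => hwzero v
      have : (0:ℚ) ≤ ∑ e : {e // e ∈ E}, g e := Finset.sum_nonneg fun e _ => hgnn e
      linarith [hvalue, this]
    · have := (mul_le_mul_iff_right₀ hspos).1 hD
      linarith
  -- extract primal/dual solutions from the feasible point
  obtain ⟨x, hx⟩ := feas
  refine ⟨fun e => x (.inl e), fun v => x (.inr v), ?_, ?_, ?_, ?_, ?_⟩
  · intro e
    show 0 ≤ x (.inl e)
    have h1 := hx (.inl (.inl e))
    simp only [covA, covb, ite_mul, neg_mul, one_mul, zero_mul,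
      Finset.sum_ite_eq', Finset.mem_univ, if_true] at h1
    linarith
  · intro v
    show 1 ≤ ∑ e : {e // e ∈ E}, if v ∈ e.1 then x (.inl e) else 0
    have h1 := hx (.inr (.inl v))
    simp only [Fintype.sum_sum_type, covA, covb, ite_mul, neg_mul, one_mul, zero_mul,
      Finset.sum_const_zero, add_zero] at h1
    have hneg : ∑ e : {e // e ∈ E}, (if v ∈ e.1 then -x (.inl e) else 0)
        = - ∑ e : {e // e ∈ E}, (if v ∈ e.1 then x (.inl e) else 0) := by
      rw [← Finset.sum_neg_distrib]
      exact Finset.sum_congr rfl fun e _ => by split_ifs <;> simp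
    rw [hneg] at h1
    linarith
  · intro v
    show 0 ≤ x (.inr v)
    have h1 := hx (.inl (.inr v))
    simp only [covA, covb, ite_mul, neg_mul, one_mul, zero_mul,
      Finset.sum_ite_eq', Finset.mem_univ, if_true] at h1
    linarith
  · intro e
    show (∑ v : V, if v ∈ e.1 then x (.inr v) else 0) ≤ 1
    have h1 := hx (.inr (.inr (.inl e)))
    simp only [Fintype.sum_sum_type, covA, covb, ite_mul, neg_mul, one_mul, zero_mul,
      Finset.sum_const_zero, zero_add] at h1
    linarith
  · show (∑ e : {e // e ∈ E}, x (.inl e)) ≤ ∑ v : V, x (.inr v)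
    have h1 := hx (.inr (.inr (.inr ())))
    simp only [Fintype.sum_sum_type, covA, covb, one_mul, neg_one_mul] at h1
    rw [Finset.sum_neg_distrib] at h1
    linarith

/-- clearing denominators -/
lemma exists_nat_scaling {V : Type} [Fintype V] (y : V → ℚ) (h0 : ∀ v, 0 ≤ y v) :
    ∃ (q : ℕ) (a : V → ℕ), 0 < q ∧ ∀ v, (a v : ℚ) = y v * q := by
  classical
  refine ⟨∏ v, (y v).den, fun v => (y v * (∏ v, (y v).den : ℕ)).num.toNat,
    Finset.prod_pos (fun v _ => (y v).pos), fun v => ?_⟩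
  obtain ⟨m, hm⟩ : ((y v).den : ℕ) ∣ ∏ v, (y v).den :=
    Finset.dvd_prod_of_mem _ (Finset.mem_univ v)
  have hint : y v * (∏ v, (y v).den : ℕ) = (((y v).num * m : ℤ) : ℚ) := by
    rw [hm]
    push_cast
    rw [← mul_assoc, Rat.mul_den_eq_num]
  have hnn : (0:ℤ) ≤ (y v).num * m := by
    have h1 : (0:ℤ) ≤ (y v).num := Rat.num_nonneg.2 (h0 v)
    have h2 : (0:ℤ) ≤ (m:ℤ) := Int.ofNat_nonneg m
    positivity
  have h2 : (y v * (∏ v, (y v).den : ℕ)).num = (y v).num * m := by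
    rw [hint, Rat.num_intCast]
  show (((y v * (∏ v, (y v).den : ℕ)).num.toNat : ℕ) : ℚ) = y v * (∏ v, (y v).den : ℕ)
  rw [h2, hint]
  exact_mod_cast congrArg (Int.cast : ℤ → ℚ) (Int.toNat_of_nonneg hnn)

lemma card_filter_fin_lt {K m : ℕ} (h : m ≤ K) :
    (Finset.univ.filter (fun d : Fin K => (d : ℕ) < m)).card = m := by
  classical
  rw [← Fintype.card_subtype]
  have : {d : Fin K // (d : ℕ) < m} ≃ Fin m :=
    { toFun := fun d => ⟨d.1.1, d.2⟩
      invFun := fun j => ⟨⟨j.1, lt_of_lt_of_le j.2 h⟩, j.2⟩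
      left_inv := fun d => by ext; rfl
      right_inv := fun j => by ext; rfl }
  rw [Fintype.card_congr this, Fintype.card_fin]

theorem agm_join_lower_bound
    (V : Type) [Fintype V] [DecidableEq V]
    (E : Finset (Finset V))
    (hEne : ∀ e ∈ E, e.Nonempty)
    (hcov : ∀ v : V, ∃ e ∈ E, v ∈ e) :
    ∀ M : ℕ, ∃ N : ℕ, M ≤ N ∧ 0 < N ∧
      ∃ (D : Type) (_ : Fintype D)
        (R : (e : Finset V) → Finset ({x // x ∈ e} → D)),
        (∀ e ∈ E, (R e).card ≤ N) ∧
        (N : ℝ) ^ sInf {w : ℝ | ∃ f : Finset V → ℝ,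
            (∀ e ∈ E, 0 ≤ f e) ∧ (∀ e ∈ E, f e ≤ 1) ∧
            (∀ v : V, 1 ≤ ∑ e ∈ E.filter (fun e => v ∈ e), f e) ∧
            w = ∑ e ∈ E, f e} ≤
          (Nat.card {t : V → D // ∀ e ∈ E, (fun v : {x // x ∈ e} => t v) ∈ R e} : ℝ) := by
  intro M
  classical
  obtain ⟨f, y, hf0, hfcov, hy0, hyP, hfy⟩ := combined_feasible E hcov
  obtain ⟨q, a, hq, ha⟩ := exists_nat_scaling y hy0
  set n : ℕ := max M 1 with hn
  have hn1 : 1 ≤ n := le_max_right M 1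
  have hn0 : 0 < n := hn1
  -- each dual weight is at most one
  have haq : ∀ v, a v ≤ q := by
    intro v
    obtain ⟨e, heE, hve⟩ := hcov v
    have h1 : y v ≤ ∑ v' : V, if v' ∈ e then y v' else 0 := by
      have := Finset.single_le_sum (f := fun v' => if v' ∈ e then y v' else 0)
        (fun v' _ => by split_ifs; exacts [hy0 v', le_refl 0]) (Finset.mem_univ v)
      simpa [hve] using this
    have h2 : y v ≤ 1 := h1.trans (hyP ⟨e, heE⟩)
    have h3 : (a v : ℚ) ≤ q := by
      rw [ha v]
      calc y v * q ≤ 1 * q := mul_le_mul_of_nonneg_right h2 (by positivity)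
        _ = q := one_mul _
    exact_mod_cast h3
  have hedge : ∀ e : {e // e ∈ E}, (∑ v ∈ e.1, a v) ≤ q := by
    intro e
    have h1 : (∑ v : V, if v ∈ e.1 then y v else 0) * q ≤ 1 * q :=
      mul_le_mul_of_nonneg_right (hyP e) (by positivity)
    have h2 : ((∑ v ∈ e.1, a v : ℕ) : ℚ) ≤ (q : ℚ) := by
      push_cast
      calc (∑ v ∈ e.1, (a v : ℚ)) = ∑ v ∈ e.1, y v * q :=
            Finset.sum_congr rfl fun v _ => ha v
        _ = ∑ v : V, (if v ∈ e.1 then y v * q else 0) := by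
            have h3 := Finset.sum_ite_mem Finset.univ e.1 (fun v => y v * (q:ℚ))
            rw [Finset.univ_inter] at h3
            rw [h3]
        _ = (∑ v : V, if v ∈ e.1 then y v else 0) * q := by
            rw [Finset.sum_mul]
            exact Finset.sum_congr rfl fun v _ => by split_ifs <;> simp
        _ ≤ 1 * q := h1
        _ = q := one_mul _
    exact_mod_cast h2
  refine ⟨n ^ q, le_trans (le_max_left M 1) (Nat.le_self_pow hq.ne' n),
    pow_pos hn0 q, Fin (n ^ q), inferInstance,
    fun e => Fintype.piFinset
      (fun v : {x // x ∈ e} => Finset.univ.filter (fun d : Fin (n ^ q) => (d : ℕ) < n ^ (a v.1))),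
    ?_, ?_⟩
  · -- cardinality of the relations
    intro e heE
    rw [Fintype.card_piFinset]
    have hc : ∀ v : {x // x ∈ e},
        (Finset.univ.filter (fun d : Fin (n ^ q) => (d : ℕ) < n ^ (a v.1))).card = n ^ (a v.1) :=
      fun v => card_filter_fin_lt (Nat.pow_le_pow_right hn0 (haq v.1))
    calc ∏ v : {x // x ∈ e},
          (Finset.univ.filter (fun d : Fin (n ^ q) => (d : ℕ) < n ^ (a v.1))).card
        = ∏ v : {x // x ∈ e}, n ^ (a v.1) := Finset.prod_congr rfl fun v _ => hc v
      _ = n ^ (∑ v : {x // x ∈ e}, a v.1) := Finset.prod_pow_eq_pow_sum _ _ _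
      _ ≤ n ^ q := by
          apply Nat.pow_le_pow_right hn0
          rw [Finset.sum_coe_sort e a]
          exact hedge ⟨e, heE⟩
  · -- the join lower bound
    set T : ℕ := ∑ v : V, a v with hT
    -- join cardinality
    have hjoin : n ^ T ≤ Nat.card {t : V → Fin (n ^ q) // ∀ e ∈ E,
        (fun v : {x // x ∈ e} => t v) ∈ Fintype.piFinset
          (fun v : {x // x ∈ e} => Finset.univ.filter
            (fun d : Fin (n ^ q) => (d : ℕ) < n ^ (a v.1)))} := by
      set J := {t : V → Fin (n ^ q) // ∀ e ∈ E,
        (fun v : {x // x ∈ e} => t v) ∈ Fintype.piFinset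
          (fun v : {x // x ∈ e} => Finset.univ.filter
            (fun d : Fin (n ^ q) => (d : ℕ) < n ^ (a v.1)))} with hJ
      have inj : ∀ h : (∀ v : V, Fin (n ^ a v)), ∀ e ∈ E,
          (fun v : {x // x ∈ e} =>
            (⟨(h v.1).1, lt_of_lt_of_le (h v.1).2 (Nat.pow_le_pow_right hn0 (haq v.1))⟩
              : Fin (n ^ q))) ∈ Fintype.piFinset
          (fun v : {x // x ∈ e} => Finset.univ.filter
            (fun d : Fin (n ^ q) => (d : ℕ) < n ^ (a v.1))) := by
        intro h e heE
        rw [Fintype.mem_piFinset]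
        intro v
        simp only [Finset.mem_filter, Finset.mem_univ, true_and]
        exact (h v.1).2
      set F : (∀ v : V, Fin (n ^ a v)) → J := fun h =>
        ⟨fun v => ⟨(h v).1, lt_of_lt_of_le (h v).2 (Nat.pow_le_pow_right hn0 (haq v))⟩,
          fun e heE => inj h e heE⟩ with hF
      have hFinj : Function.Injective F := by
        intro h1 h2 heq
        funext v
        have h5 := congrFun (congrArg Subtype.val heq) v
        have h6 := congrArg Fin.val h5
        exact Fin.ext (show ((h1 v).val : ℕ) = (h2 v).val from h6)
      have h1 : Nat.card (∀ v : V, Fin (n ^ a v)) ≤ Nat.card J :=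
        Nat.card_le_card_of_injective F hFinj
      have h2 : Nat.card (∀ v : V, Fin (n ^ a v)) = n ^ T := by
        rw [Nat.card_pi]
        simp only [Nat.card_eq_fintype_card, Fintype.card_fin]
        rw [Finset.prod_pow_eq_pow_sum]
      rw [← h2]
      exact h1
    -- the fractional edge cover number is at most T / q
    set S : Set ℝ := {w : ℝ | ∃ f : Finset V → ℝ,
        (∀ e ∈ E, 0 ≤ f e) ∧ (∀ e ∈ E, f e ≤ 1) ∧
        (∀ v : V, 1 ≤ ∑ e ∈ E.filter (fun e => v ∈ e), f e) ∧
        w = ∑ e ∈ E, f e} with hS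
    set fQ : Finset V → ℚ := fun e => if h : e ∈ E then f ⟨e, h⟩ else 0 with hfQ
    have hfQ0 : ∀ e ∈ E, 0 ≤ fQ e := by
      intro e he
      rw [hfQ]
      simp only [dif_pos he]
      exact hf0 _
    set Fr : Finset V → ℝ := fun e => min ((fQ e : ℝ)) 1 with hFr
    have hFr0 : ∀ e ∈ E, 0 ≤ Fr e := by
      intro e he
      exact le_min (by exact_mod_cast hfQ0 e he) zero_le_one
    have hcovQ : ∀ v : V, (1:ℚ) ≤ ∑ e ∈ E.filter (fun e => v ∈ e), fQ e := by
      intro v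
      rw [Finset.sum_filter]
      have h1 := hfcov v
      have h2 : ∑ e : {e // e ∈ E}, (if v ∈ e.1 then f e else 0)
          = ∑ e ∈ E, (if v ∈ e then fQ e else 0) := by
        rw [← Finset.sum_coe_sort E (fun e' => if v ∈ e' then fQ e' else 0)]
        refine Finset.sum_congr rfl fun e _ => ?_
        have : fQ e.1 = f e := by rw [hfQ]; simp only [dif_pos e.2]
        rw [this]
      rwa [h2] at h1
    have hmem : (∑ e ∈ E, Fr e) ∈ S := by
      refine ⟨Fr, hFr0, fun e he => min_le_right _ _, fun v => ?_, rfl⟩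
      by_cases hbig : ∃ e ∈ E.filter (fun e => v ∈ e), (1:ℚ) ≤ fQ e
      · obtain ⟨e0, he0, hf1⟩ := hbig
        have hFr1 : Fr e0 = 1 := min_eq_right (by exact_mod_cast hf1)
        have := Finset.single_le_sum (f := Fr)
          (fun e he => hFr0 e (Finset.mem_filter.1 he).1) he0
        rw [hFr1] at this
        exact this
      · push_neg at hbig
        have heq : ∀ e ∈ E.filter (fun e => v ∈ e), Fr e = ((fQ e : ℝ)) := by
          intro e he
          exact min_eq_left (by exact_mod_cast (hbig e he).le)
        rw [Finset.sum_congr rfl heq]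
        have := hcovQ v
        have hcast : ((∑ e ∈ E.filter (fun e => v ∈ e), fQ e : ℚ) : ℝ)
            = ∑ e ∈ E.filter (fun e => v ∈ e), ((fQ e : ℝ)) := by push_cast; rfl
        rw [← hcast]
        exact_mod_cast this
    have hbdd : BddBelow S := by
      refine ⟨0, fun w hw => ?_⟩
      obtain ⟨g, hg0, _, _, hwg⟩ := hw
      rw [hwg]
      exact Finset.sum_nonneg hg0
    have hρ1 : sInf S ≤ ∑ e ∈ E, Fr e := csInf_le hbdd hmem
    have hρ2 : (∑ e ∈ E, Fr e) ≤ ((∑ e : {e // e ∈ E}, f e : ℚ) : ℝ) := by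
      have h1 : (∑ e ∈ E, Fr e) ≤ ∑ e ∈ E, ((fQ e : ℝ)) :=
        Finset.sum_le_sum fun e _ => min_le_left _ _
      have h2 : ∑ e ∈ E, ((fQ e : ℝ)) = ((∑ e ∈ E, fQ e : ℚ) : ℝ) := by push_cast; rfl
      have h3 : (∑ e ∈ E, fQ e) = ∑ e : {e // e ∈ E}, f e := by
        rw [← Finset.sum_coe_sort E fQ]
        refine Finset.sum_congr rfl fun e _ => ?_
        rw [hfQ]; simp only [dif_pos e.2]
      rw [h2, h3] at h1
      exact h1
    have hyT : ((∑ v : V, y v : ℚ) : ℝ) = (T : ℝ) / (q : ℝ) := by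
      have h1 : ((T : ℕ) : ℚ) = (∑ v : V, y v) * q := by
        rw [hT]
        push_cast
        rw [Finset.sum_mul]
        exact Finset.sum_congr rfl fun v _ => ha v
      have hq0 : (q : ℚ) ≠ 0 := by exact_mod_cast hq.ne'
      have h2 : (∑ v : V, y v : ℚ) = (T : ℚ) / q := by
        field_simp [h1]
        exact h1.symm
      rw [h2]
      push_cast
      rfl
    have hexp : sInf S ≤ (T : ℝ) / (q : ℝ) := by
      have h4 : ((∑ e : {e // e ∈ E}, f e : ℚ) : ℝ) ≤ ((∑ v : V, y v : ℚ) : ℝ) := by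
        exact_mod_cast hfy
      calc sInf S ≤ ∑ e ∈ E, Fr e := hρ1
        _ ≤ ((∑ e : {e // e ∈ E}, f e : ℚ) : ℝ) := hρ2
        _ ≤ ((∑ v : V, y v : ℚ) : ℝ) := h4
        _ = (T : ℝ) / (q : ℝ) := hyT
    have h1N : (1:ℝ) ≤ ((n ^ q : ℕ) : ℝ) := by
      exact_mod_cast Nat.one_le_pow q n hn0
    calc ((n ^ q : ℕ) : ℝ) ^ sInf S
        ≤ ((n ^ q : ℕ) : ℝ) ^ ((T : ℝ) / (q : ℝ)) :=
          Real.rpow_le_rpow_of_exponent_le h1N hexp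
      _ = ((n : ℝ) ^ ((q : ℝ))) ^ ((T : ℝ) / (q : ℝ)) := by
          rw [Real.rpow_natCast]
          push_cast
          rfl
      _ = (n : ℝ) ^ ((q : ℝ) * ((T : ℝ) / (q : ℝ))) := by
          rw [← Real.rpow_mul (by positivity)]
      _ = (n : ℝ) ^ ((T : ℝ)) := by
          congr 1
          field_simp
      _ = ((n ^ T : ℕ) : ℝ) := by
          rw [Real.rpow_natCast]
          push_cast
          rfl
      _ ≤ _ := by
          exact_mod_cast hjoin
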